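/- If G is a finite simple graph with no weak support (no vertex of G is adjacent to exactly one leaf), then γ_cer(G) = γ(G). -/

import Mathlib

open Finset

variable {V : Type*} [Fintype V] [DecidableEq V]

/-- `D` is a dominating set of `G`: every vertex outside `D` has a neighbour in `D`. -/
def IsDomSet (G : SimpleGraph V) (D : Finset V) : Prop :=
  ∀ v ∉ D, ∃ u ∈ D, G.Adj u v

/-- `D` is a certified dominating set of `G`: it is dominating and every vertex of `D`
has either zero or at least two neighbours outside `D`. -/
def IsCertDomSet (G : SimpleGraph V) [DecidableRel G.Adj] (D : Finset V) : Prop :=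
  IsDomSet G D ∧ ∀ v ∈ D, (G.neighborFinset v \ D).card = 0 ∨ 2 ≤ (G.neighborFinset v \ D).card

/-- The domination number: minimum cardinality of a dominating set. -/
noncomputable def gamma (G : SimpleGraph V) : ℕ :=
  sInf {n | ∃ D : Finset V, IsDomSet G D ∧ D.card = n}

/-- The certified domination number: minimum cardinality of a certified dominating set. -/
noncomputable def gammaCer (G : SimpleGraph V) [DecidableRel G.Adj] : ℕ :=
  sInf {n | ∃ D : Finset V, IsCertDomSet G D ∧ D.card = n}

/-- A leaf is a vertex of degree one. -/
abbrev IsLeaf (G : SimpleGraph V) [DecidableRel G.Adj] (v : V) : Prop := G.degree v = 1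

/-- The set of leaf-neighbours of a vertex. -/
abbrev leafNbrs (G : SimpleGraph V) [DecidableRel G.Adj] (v : V) : Finset V :=
  (G.neighborFinset v).filter (fun l => G.degree l = 1)

/-- A weak support is a vertex adjacent to exactly one leaf. -/
abbrev IsWeakSupport (G : SimpleGraph V) [DecidableRel G.Adj] (v : V) : Prop :=
  (leafNbrs G v).card = 1

/-- A strong support is a vertex adjacent to at least two leaves. -/
abbrev IsStrongSupport (G : SimpleGraph V) [DecidableRel G.Adj] (v : V) : Prop :=
  2 ≤ (leafNbrs G v).card

lemma mem_nb {G : SimpleGraph V} [DecidableRel G.Adj] {v w : V} :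
    w ∈ G.neighborFinset v ↔ G.Adj v w := SimpleGraph.mem_neighborFinset _ _ _

lemma domUniv (G : SimpleGraph V) : IsDomSet G (univ : Finset V) :=
  fun v hv => absurd (mem_univ v) hv

lemma gamma_le (G : SimpleGraph V) {D : Finset V} (hD : IsDomSet G D) :
    gamma G ≤ D.card := Nat.sInf_le ⟨D, hD, rfl⟩

lemma gamma_spec (G : SimpleGraph V) : ∃ D : Finset V, IsDomSet G D ∧ D.card = gamma G := by
  have hmem : gamma G ∈ {n | ∃ D : Finset V, IsDomSet G D ∧ D.card = n} :=
    Nat.sInf_mem ⟨(univ : Finset V).card, univ, domUniv G, rfl⟩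
  obtain ⟨D, h1, h2⟩ := hmem
  exact ⟨D, h1, h2⟩

theorem gammaCer_eq_gamma_of_no_weakSupport (G : SimpleGraph V) [DecidableRel G.Adj]
    (h : ∀ v : V, ¬ IsWeakSupport G v) :
    gammaCer G = gamma G := by
  classical
  have hle1 : gamma G ≤ gammaCer G := by
    have hmem : gammaCer G ∈ {n | ∃ D : Finset V, IsCertDomSet G D ∧ D.card = n} := by
      refine Nat.sInf_mem ⟨(univ : Finset V).card, univ, ⟨domUniv G, ?_⟩, rfl⟩
      intro v _
      left
      simp
    obtain ⟨D, hcert, hcd⟩ := hmem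
    calc gamma G ≤ D.card := gamma_le G hcert.1
    _ = gammaCer G := hcd
  have hle2 : gammaCer G ≤ gamma G := by
    obtain ⟨D₀, hD₀, hc₀⟩ := gamma_spec G
    have hPmem : sInf {m | ∃ D : Finset V, IsDomSet G D ∧ D.card = gamma G ∧
        (D.filter (fun x => (G.neighborFinset x \ D).card = 1)).card = m}
        ∈ {m | ∃ D : Finset V, IsDomSet G D ∧ D.card = gamma G ∧
        (D.filter (fun x => (G.neighborFinset x \ D).card = 1)).card = m} :=
      Nat.sInf_mem ⟨_, D₀, hD₀, hc₀, rfl⟩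
    obtain ⟨D, hdom, hcard, hbad⟩ := hPmem
    -- Lemma Z : a vertex of D with no outside neighbour but with some neighbour gives a
    -- smaller dominating set, contradiction.
    have hZ : ∀ x ∈ D, ∀ y, G.Adj x y → (G.neighborFinset x \ D).card ≠ 0 := by
      intro x hx y hxy h0
      have hsub : G.neighborFinset x ⊆ D := by
        intro z hz
        by_contra hzD
        have hzmem := mem_sdiff.mpr ⟨hz, hzD⟩
        rw [card_eq_zero.mp h0] at hzmem
        exact notMem_empty z hzmem
      have hyD : y ∈ D := hsub (mem_nb.mpr hxy)
      have hdom' : IsDomSet G (D.erase x) := by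
        intro z hz
        by_cases hzx : z = x
        · subst hzx
          exact ⟨y, mem_erase.mpr ⟨(G.ne_of_adj hxy).symm, hyD⟩, G.adj_symm hxy⟩
        · have hzD : z ∉ D := fun hh => hz (mem_erase.mpr ⟨hzx, hh⟩)
          obtain ⟨d, hdD, hdz⟩ := hdom z hzD
          refine ⟨d, mem_erase.mpr ⟨?_, hdD⟩, hdz⟩
          rintro rfl
          exact hzD (hsub (mem_nb.mpr hdz))
      have hle := gamma_le G hdom'
      rw [card_erase_of_mem hx] at hle
      have h1 : 1 ≤ D.card := card_pos.mpr ⟨x, hx⟩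
      omega
    have hempty : D.filter (fun x => (G.neighborFinset x \ D).card = 1) = ∅ := by
      by_contra hne
      obtain ⟨v, hv⟩ := nonempty_iff_ne_empty.mpr hne
      have hvD : v ∈ D := (mem_filter.mp hv).1
      have hv1 : (G.neighborFinset v \ D).card = 1 := (mem_filter.mp hv).2
      obtain ⟨u, hu⟩ := card_eq_one.mp hv1
      have humem : u ∈ G.neighborFinset v \ D := by rw [hu]; exact mem_singleton_self u
      have hunb : u ∈ G.neighborFinset v := (mem_sdiff.mp humem).1
      have huD : u ∉ D := (mem_sdiff.mp humem).2
      have hadj : G.Adj v u := mem_nb.mp hunb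
      have hext : ∀ w, G.Adj v w → w ∉ D → w = u := by
        intro w h1 h2
        have : w ∈ G.neighborFinset v \ D :=
          mem_sdiff.mpr ⟨mem_nb.mpr h1, h2⟩
        rw [hu] at this
        exact mem_singleton.mp this
      -- v is not a leaf
      have hvdeg : 2 ≤ (G.neighborFinset v).card := by
        have h1le : 1 ≤ (G.neighborFinset v).card := card_pos.mpr ⟨u, hunb⟩
        rcases Nat.lt_or_ge (G.neighborFinset v).card 2 with hlt | hge
        · exfalso
          have hdv : G.degree v = 1 := by
            rw [← SimpleGraph.card_neighborFinset_eq_degree]; omega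
          have hvleaf : v ∈ leafNbrs G u :=
            mem_filter.mpr ⟨mem_nb.mpr (G.adj_symm hadj), hdv⟩
          have h2 : 1 < (leafNbrs G u).card := by
            have hne1 := h u
            have h1l : 1 ≤ (leafNbrs G u).card := card_pos.mpr ⟨v, hvleaf⟩
            simp only [IsWeakSupport] at hne1
            omega
          obtain ⟨l, hl, hlv⟩ := exists_mem_ne h2 v
          have hladj : G.Adj u l := mem_nb.mp (mem_filter.mp hl).1
          have hldeg : G.degree l = 1 := (mem_filter.mp hl).2
          have hlnb : G.neighborFinset l = {u} := by
            apply eq_singleton_iff_unique_mem.mpr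
            refine ⟨mem_nb.mpr (G.adj_symm hladj), ?_⟩
            intro x hx
            have hc1 : (G.neighborFinset l).card ≤ 1 := by
              rw [SimpleGraph.card_neighborFinset_eq_degree, hldeg]
            exact card_le_one.mp hc1 x hx u (mem_nb.mpr (G.adj_symm hladj))
          by_cases hlD : l ∈ D
          · -- remove v and l, add u : smaller dominating set
            have hvnb : G.neighborFinset v = {u} := by
              apply eq_singleton_iff_unique_mem.mpr
              refine ⟨hunb, ?_⟩
              intro x hx
              have hc1 : (G.neighborFinset v).card ≤ 1 := by omega
              exact card_le_one.mp hc1 x hx u hunb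
            have hdomE : IsDomSet G (insert u ((D.erase v).erase l)) := by
              intro z hz
              by_cases hzv : z = v
              · subst hzv; exact ⟨u, mem_insert_self u _, G.adj_symm hadj⟩
              by_cases hzl : z = l
              · subst hzl; exact ⟨u, mem_insert_self u _, hladj⟩
              have hzD : z ∉ D := by
                intro hzD
                exact hz (mem_insert_of_mem (mem_erase.mpr ⟨hzl, mem_erase.mpr ⟨hzv, hzD⟩⟩))
              obtain ⟨d, hdD, hdz⟩ := hdom z hzD
              by_cases hdv : d = v
              · exfalso
                have hzu : z = u := hext z (hdv ▸ hdz) hzD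
                exact hz (by rw [hzu]; exact mem_insert_self u _)
              by_cases hdl : d = l
              · exfalso
                have hznb : z ∈ G.neighborFinset l :=
                  mem_nb.mpr (hdl ▸ hdz)
                rw [hlnb, mem_singleton] at hznb
                exact hz (by rw [hznb]; exact mem_insert_self u _)
              · exact ⟨d, mem_insert_of_mem (mem_erase.mpr ⟨hdl, mem_erase.mpr ⟨hdv, hdD⟩⟩), hdz⟩
            have hle := gamma_le G hdomE
            have hucard : u ∉ (D.erase v).erase l :=
              fun hmem => huD (mem_of_mem_erase (mem_of_mem_erase hmem))
            have hlmem : l ∈ D.erase v := mem_erase.mpr ⟨hlv, hlD⟩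
            rw [card_insert_of_notMem hucard, card_erase_of_mem hlmem,
              card_erase_of_mem hvD] at hle
            have h2c : 2 ≤ D.card := one_lt_card.mpr ⟨v, hvD, l, hlD, Ne.symm hlv⟩
            omega
          · obtain ⟨d, hdD, hdl2⟩ := hdom l hlD
            have hdnb : d ∈ G.neighborFinset l :=
              mem_nb.mpr (G.adj_symm hdl2)
            rw [hlnb, mem_singleton] at hdnb
            exact huD (hdnb ▸ hdD)
        · exact hge
      -- u is not a leaf
      have hudeg : 2 ≤ (G.neighborFinset u).card := by
        have hvnbu : v ∈ G.neighborFinset u := mem_nb.mpr (G.adj_symm hadj)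
        have h1le : 1 ≤ (G.neighborFinset u).card := card_pos.mpr ⟨v, hvnbu⟩
        rcases Nat.lt_or_ge (G.neighborFinset u).card 2 with hlt | hge
        · exfalso
          have hdu : G.degree u = 1 := by
            rw [← SimpleGraph.card_neighborFinset_eq_degree]; omega
          have huleaf : u ∈ leafNbrs G v := mem_filter.mpr ⟨hunb, hdu⟩
          have h2 : 1 < (leafNbrs G v).card := by
            have hne1 := h v
            have h1l : 1 ≤ (leafNbrs G v).card := card_pos.mpr ⟨u, huleaf⟩
            simp only [IsWeakSupport] at hne1
            omega
          obtain ⟨l, hl, hlu⟩ := exists_mem_ne h2 u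
          have hladj : G.Adj v l := mem_nb.mp (mem_filter.mp hl).1
          have hldeg : G.degree l = 1 := (mem_filter.mp hl).2
          have hlnb : G.neighborFinset l = {v} := by
            apply eq_singleton_iff_unique_mem.mpr
            refine ⟨mem_nb.mpr (G.adj_symm hladj), ?_⟩
            intro x hx
            have hc1 : (G.neighborFinset l).card ≤ 1 := by
              rw [SimpleGraph.card_neighborFinset_eq_degree, hldeg]
            exact card_le_one.mp hc1 x hx v (mem_nb.mpr (G.adj_symm hladj))
          by_cases hlD : l ∈ D
          · apply hZ l hlD v (G.adj_symm hladj)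
            rw [hlnb]
            apply card_eq_zero.mpr
            apply sdiff_eq_empty_iff_subset.mpr
            exact singleton_subset_iff.mpr hvD
          · exact hlu (hext l hladj hlD)
        · exact hge
      -- v has a neighbour z ∈ D
      obtain ⟨z, hznb, hzu⟩ := exists_mem_ne hvdeg u
      have hzadj : G.Adj v z := mem_nb.mp hznb
      have hzD : z ∈ D := by
        by_contra h'
        exact hzu (hext z hzadj h')
      have hzv : z ≠ v := fun hh => G.irrefl (hh ▸ hzadj)
      -- v is the only neighbour of u in D
      have hpriv : ∀ y ∈ D, G.Adj y u → y = v := by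
        intro y hyD hyu
        by_contra hyv
        have hdom' : IsDomSet G (D.erase v) := by
          intro w hw
          by_cases hwv : w = v
          · subst hwv
            exact ⟨z, mem_erase.mpr ⟨hzv, hzD⟩, G.adj_symm hzadj⟩
          have hwD : w ∉ D := fun hh => hw (mem_erase.mpr ⟨hwv, hh⟩)
          by_cases hwu : w = u
          · subst hwu
            exact ⟨y, mem_erase.mpr ⟨hyv, hyD⟩, hyu⟩
          obtain ⟨d, hdD, hdw⟩ := hdom w hwD
          refine ⟨d, mem_erase.mpr ⟨?_, hdD⟩, hdw⟩
          rintro rfl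
          exact hwu (hext w hdw hwD)
        have hle := gamma_le G hdom'
        rw [card_erase_of_mem hvD] at hle
        have h1 : 1 ≤ D.card := card_pos.mpr ⟨v, hvD⟩
        omega
      -- the swap D' = (D \ {v}) ∪ {u}
      have hdomD' : IsDomSet G (insert u (D.erase v)) := by
        intro w hw
        by_cases hwv : w = v
        · subst hwv
          exact ⟨u, mem_insert_self u _, G.adj_symm hadj⟩
        have hwD : w ∉ D := fun hh => hw (mem_insert_of_mem (mem_erase.mpr ⟨hwv, hh⟩))
        obtain ⟨d, hdD, hdw⟩ := hdom w hwD
        by_cases hdv : d = v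
        · exfalso
          have hwu : w = u := hext w (hdv ▸ hdw) hwD
          exact hw (by rw [hwu]; exact mem_insert_self u _)
        · exact ⟨d, mem_insert_of_mem (mem_erase.mpr ⟨hdv, hdD⟩), hdw⟩
      have hcardD' : (insert u (D.erase v)).card = gamma G := by
        have h1 : u ∉ D.erase v := fun hh => huD (mem_of_mem_erase hh)
        rw [card_insert_of_notMem h1, card_erase_of_mem hvD]
        have h2 : 1 ≤ D.card := card_pos.mpr ⟨v, hvD⟩
        omega
      -- the bad set of D' is strictly smaller
      have hsub : (insert u (D.erase v)).filter
            (fun x => (G.neighborFinset x \ insert u (D.erase v)).card = 1) ⊆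
          (D.filter (fun x => (G.neighborFinset x \ D).card = 1)).erase v := by
        intro x hx
        obtain ⟨hxD', hx1⟩ := mem_filter.mp hx
        rcases mem_insert.mp hxD' with rfl | hxE
        · exfalso
          have heq : G.neighborFinset x \ insert x (D.erase v) = G.neighborFinset x := by
            ext y
            simp only [mem_sdiff, SimpleGraph.mem_neighborFinset, mem_insert, mem_erase]
            constructor
            · rintro ⟨h1, _⟩; exact h1
            · intro h1
              refine ⟨h1, ?_⟩
              rintro (rfl | ⟨hyv, hyD⟩)
              · exact G.irrefl h1
              · exact hyv (hpriv y hyD (G.adj_symm h1))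
          rw [heq] at hx1
          omega
        · obtain ⟨hxv, hxD⟩ := mem_erase.mp hxE
          refine mem_erase.mpr ⟨hxv, mem_filter.mpr ⟨hxD, ?_⟩⟩
          by_cases hvx : G.Adj x v
          · exfalso
            have h0 := hZ x hxD v hvx
            obtain ⟨y₀, hy₀⟩ := card_pos.mp (Nat.pos_of_ne_zero h0)
            obtain ⟨hy₀nb, hy₀D⟩ := mem_sdiff.mp hy₀
            have hy₀u : y₀ ≠ u := by
              rintro rfl
              exact hxv (hpriv x hxD (mem_nb.mp hy₀nb))
            have hvmem : v ∈ G.neighborFinset x \ insert u (D.erase v) := by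
              refine mem_sdiff.mpr ⟨mem_nb.mpr hvx, ?_⟩
              intro hmem
              rcases mem_insert.mp hmem with h' | h'
              · exact huD (h' ▸ hvD)
              · exact (mem_erase.mp h').1 rfl
            have hy₀mem : y₀ ∈ G.neighborFinset x \ insert u (D.erase v) := by
              refine mem_sdiff.mpr ⟨hy₀nb, ?_⟩
              intro hmem
              rcases mem_insert.mp hmem with h' | h'
              · exact hy₀u h'
              · exact hy₀D (mem_of_mem_erase h')
            have hy₀v : y₀ ≠ v := fun hh => hy₀D (hh ▸ hvD)
            have h2c : 1 < (G.neighborFinset x \ insert u (D.erase v)).card :=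
              one_lt_card.mpr ⟨v, hvmem, y₀, hy₀mem, Ne.symm hy₀v⟩
            omega
          · have heq : G.neighborFinset x \ insert u (D.erase v) = G.neighborFinset x \ D := by
              ext y
              simp only [mem_sdiff, SimpleGraph.mem_neighborFinset, mem_insert, mem_erase]
              constructor
              · rintro ⟨h1, h2⟩
                refine ⟨h1, fun hyD => h2 ?_⟩
                right
                refine ⟨?_, hyD⟩
                rintro rfl
                exact hvx h1
              · rintro ⟨h1, h2⟩
                refine ⟨h1, ?_⟩
                rintro (rfl | ⟨_, hyD⟩)
                · exact hxv (hpriv x hxD h1)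
                · exact h2 hyD
            rw [heq] at hx1
            exact hx1
      have hlt : ((insert u (D.erase v)).filter
            (fun x => (G.neighborFinset x \ insert u (D.erase v)).card = 1)).card <
          (D.filter (fun x => (G.neighborFinset x \ D).card = 1)).card :=
        lt_of_le_of_lt (card_le_card hsub) (card_erase_lt_of_mem hv)
      have hmin : sInf {m | ∃ D : Finset V, IsDomSet G D ∧ D.card = gamma G ∧
            (D.filter (fun x => (G.neighborFinset x \ D).card = 1)).card = m} ≤
          ((insert u (D.erase v)).filter
            (fun x => (G.neighborFinset x \ insert u (D.erase v)).card = 1)).card :=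
        Nat.sInf_le ⟨insert u (D.erase v), hdomD', hcardD', rfl⟩
      omega
    have hcert : IsCertDomSet G D := by
      refine ⟨hdom, ?_⟩
      intro x hxD
      have hx1 : (G.neighborFinset x \ D).card ≠ 1 := by
        intro hh
        have hmem : x ∈ D.filter (fun x => (G.neighborFinset x \ D).card = 1) :=
          mem_filter.mpr ⟨hxD, hh⟩
        rw [hempty] at hmem
        exact notMem_empty x hmem
      omega
    calc gammaCer G ≤ D.card := Nat.sInf_le ⟨D, hcert, rfl⟩
    _ = gamma G := hcard
  exact le_antisymm hle2 hle1
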